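/- For every γ ≥ 0 and every state a ∈ S, the ski-rental cost-to-go function satisfies V(γ, a) = c^f(a) − Σ_{i∈sub(a)} β*_i(γ)·π(i)/π(a). -/

import Mathlib

open scoped Classical
open Finset

/-- A finite tree-structured Markov chain: a finite state space partitioned into
levels `0, …, L-1`, a root `r` at level `0`, a parent map `pa` (with `pa r = r` by
convention), and transition probabilities `p i ∈ (0,1]` of being reached from the
parent, with `p r = 1`. -/
structure TreeMC (S : Type*) [Fintype S] [DecidableEq S] where
  /-- the number of levels -/
  L : ℕ
  /-- the root -/
  r : S
  /-- the parent map (with `pa r = r` by convention) -/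
  pa : S → S
  /-- the level of each state -/
  level : S → ℕ
  /-- the probability of being reached from the parent -/
  p : S → ℝ
  level_lt : ∀ i, level i < L
  level_r : level r = 0
  root_unique : ∀ i, level i = 0 → i = r
  pa_r : pa r = r
  level_pa : ∀ i, i ≠ r → level (pa i) + 1 = level i
  p_pos : ∀ i, 0 < p i
  p_le_one : ∀ i, p i ≤ 1
  p_r : p r = 1

namespace TreeMC

variable {S : Type*} [Fintype S] [DecidableEq S] (M : TreeMC S)

/-- The ancestors of `i`: states on the path from the root to `i` (both included). -/
noncomputable def anc (i : S) : Finset S :=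
  Finset.univ.filter fun a => ∃ n : ℕ, M.pa^[n] i = a

/-- The subtree of `i`: all states having `i` as an ancestor. -/
noncomputable def subt (i : S) : Finset S :=
  Finset.univ.filter fun k => i ∈ M.anc k

/-- The subtree of a set of states. -/
noncomputable def subF (X : Finset S) : Finset S :=
  Finset.univ.filter fun k => ∃ i ∈ X, k ∈ M.subt i

/-- `π i`: the probability that a job passes through state `i`. -/
noncomputable def pi (i : S) : ℝ :=
  ∏ a ∈ M.anc i, M.p a

/-- The children of `i`. -/
noncomputable def child (i : S) : Finset S :=
  Finset.univ.filter fun k => k ≠ M.r ∧ M.pa k = i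

/-- `T` is the top set of `X`: a subset of `X` whose subtree covers `X` and in which
no state lies in the subtree of a different state. -/
def IsTopSet (X T : Finset S) : Prop :=
  T ⊆ X ∧ X ⊆ M.subF T ∧ ∀ i ∈ T, ∀ k ∈ T, i ≠ k → k ∉ M.subt i

/-- Expected future cost conditional on being in state `a`. -/
noncomputable def cf (c : S → ℝ) (a : S) : ℝ :=
  ∑ i ∈ M.subt a, c i * M.pi i / M.pi a

/-- `V` is the ski-rental value function:
`V γ i = min (γ, c i + Σ_{k ∈ child i} p k · V γ k)`. -/
def IsSkiValue (c : S → ℝ) (V : ℝ → S → ℝ) : Prop :=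
  ∀ γ : ℝ, ∀ i : S, V γ i = min γ (c i + ∑ k ∈ M.child i, M.p k * V γ k)

/-- Expected future cost-to-go `V^f`. -/
noncomputable def Vf (V : ℝ → S → ℝ) (γ : ℝ) (i : S) : ℝ :=
  ∑ k ∈ M.child i, M.p k * V γ k

/-- The candidate optimal state duals `β*(γ)`. -/
noncomputable def betaStar (c : S → ℝ) (V : ℝ → S → ℝ) (γ : ℝ) (i : S) : ℝ :=
  max 0 (c i + M.Vf V γ i - γ)

/-- Feasibility for the dual program `D*(γ)`. -/
def DualFeasible (c : S → ℝ) (γ : ℝ) (β : S → ℝ) : Prop :=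
  (∀ i, 0 ≤ β i) ∧ ∀ a, M.cf c a ≤ γ + ∑ i ∈ M.subt a, β i * M.pi i / M.pi a

/-- Feasibility for the fluid LP (OriginalFluid). -/
def OrigFeasible (lam mu : ℝ) (q ν : S → ℝ) : Prop :=
  (∀ i, 0 ≤ q i) ∧ (∀ i, 0 ≤ ν i) ∧ q M.r = lam ∧
    (∀ i, i ≠ M.r → q i = (q (M.pa i) - ν (M.pa i)) * M.p i) ∧
    (∀ i, ν i ≤ q i) ∧ ∑ i : S, ν i ≤ mu

/-- Feasibility for the fluid LP (SimplerFluid). -/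
def SimpFeasible (lam mu : ℝ) (ν : S → ℝ) : Prop :=
  (∀ i, 0 ≤ ν i) ∧ (∀ i, ∑ a ∈ M.anc i, ν a * M.pi i / M.pi a ≤ lam * M.pi i) ∧
    ∑ i : S, ν i ≤ mu

lemma mem_anc_iff {i a : S} : a ∈ M.anc i ↔ ∃ n : ℕ, M.pa^[n] i = a := by
  simp [anc]

lemma mem_subt_iff {a i : S} : i ∈ M.subt a ↔ a ∈ M.anc i := by simp [subt]

lemma self_mem_anc (i : S) : i ∈ M.anc i := (M.mem_anc_iff).mpr ⟨0, rfl⟩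

lemma self_mem_subt (i : S) : i ∈ M.subt i := (M.mem_subt_iff).mpr (M.self_mem_anc i)

lemma level_iter {x y : S} (n : ℕ) (h : M.pa^[n] x = y) :
    M.level y ≤ M.level x ∧ (y ≠ x → M.level y < M.level x) := by
  induction n generalizing x with
  | zero => simp only [Function.iterate_zero, id] at h; subst h; simp
  | succ n ih =>
    rw [Function.iterate_succ_apply] at h
    by_cases hx : x = M.r
    · subst hx
      rw [M.pa_r] at h
      have h1 := (ih h).1
      rw [M.level_r] at h1
      have : y = M.r := M.root_unique y (by omega)
      subst this; simp
    · have hlev := M.level_pa x hx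
      have h1 := (ih h).1
      constructor
      · omega
      · intro _; omega

lemma pi_pos (i : S) : 0 < M.pi i := Finset.prod_pos fun a _ => M.p_pos a

lemma anc_eq {k : S} (hk : k ≠ M.r) : M.anc k = insert k (M.anc (M.pa k)) := by
  ext a
  simp only [mem_anc_iff, Finset.mem_insert]
  constructor
  · rintro ⟨n, rfl⟩
    cases n with
    | zero => left; rfl
    | succ n => right; exact ⟨n, by rw [← Function.iterate_succ_apply]⟩
  · rintro (rfl | ⟨n, rfl⟩)
    · exact ⟨0, rfl⟩
    · exact ⟨n + 1, Function.iterate_succ_apply _ _ _⟩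

lemma not_mem_anc_pa {k : S} (hk : k ≠ M.r) : k ∉ M.anc (M.pa k) := by
  intro h
  obtain ⟨n, hn⟩ := (M.mem_anc_iff).mp h
  have hlev := M.level_pa k hk
  rcases eq_or_ne k (M.pa k) with he | he
  · rw [← he] at hlev; omega
  · have := (M.level_iter n hn).2 he
    omega

lemma pi_child {k : S} (hk : k ≠ M.r) : M.pi k = M.p k * M.pi (M.pa k) := by
  rw [pi, M.anc_eq hk, Finset.prod_insert (M.not_mem_anc_pa hk)]; rfl

lemma mem_child_iff {a k : S} : k ∈ M.child a ↔ k ≠ M.r ∧ M.pa k = a := by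
  simp [child]

lemma level_child {a k : S} (hk : k ∈ M.child a) : M.level k = M.level a + 1 := by
  obtain ⟨h1, h2⟩ := (M.mem_child_iff).mp hk
  have := M.level_pa k h1
  rw [h2] at this; omega

lemma pi_child' {a k : S} (hk : k ∈ M.child a) : M.pi k = M.p k * M.pi a := by
  obtain ⟨h1, h2⟩ := (M.mem_child_iff).mp hk
  rw [M.pi_child h1, h2]

lemma mem_subt_cases {a i : S} (hi : i ∈ M.subt a) :
    i = a ∨ ∃ k ∈ M.child a, i ∈ M.subt k := by
  obtain ⟨n, hn⟩ := (M.mem_anc_iff).mp ((M.mem_subt_iff).mp hi)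
  clear hi
  induction n with
  | zero =>
    left
    simp only [Function.iterate_zero, id] at hn
    exact hn
  | succ n ih =>
    rw [Function.iterate_succ_apply'] at hn
    set k := M.pa^[n] i with hkdef
    rcases eq_or_ne k a with he | he
    · exact ih he
    · right
      have hkr : k ≠ M.r := by
        intro h
        apply he
        rw [h] at hn ⊢
        rw [M.pa_r] at hn
        exact hn
      exact ⟨k, (M.mem_child_iff).mpr ⟨hkr, hn⟩,
        (M.mem_subt_iff).mpr ((M.mem_anc_iff).mpr ⟨n, rfl⟩)⟩

lemma subt_eq (a : S) : M.subt a = insert a ((M.child a).biUnion M.subt) := by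
  ext i
  simp only [Finset.mem_insert, Finset.mem_biUnion]
  constructor
  · exact fun h => M.mem_subt_cases h
  · rintro (rfl | ⟨k, hk, hik⟩)
    · exact M.self_mem_subt i
    · obtain ⟨n, hn⟩ := (M.mem_anc_iff).mp ((M.mem_subt_iff).mp hik)
      obtain ⟨_, h2⟩ := (M.mem_child_iff).mp hk
      refine (M.mem_subt_iff).mpr ((M.mem_anc_iff).mpr ⟨n + 1, ?_⟩)
      rw [Function.iterate_succ_apply', hn, h2]

lemma not_mem_biUnion_child (a : S) : a ∉ (M.child a).biUnion M.subt := by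
  intro h
  obtain ⟨k, hk, hak⟩ := Finset.mem_biUnion.mp h
  obtain ⟨n, hn⟩ := (M.mem_anc_iff).mp ((M.mem_subt_iff).mp hak)
  have h1 := (M.level_iter n hn).1
  have h2 := M.level_child hk
  omega

lemma subt_disjoint {a : S} {k₁ k₂ : S} (h₁ : k₁ ∈ M.child a) (h₂ : k₂ ∈ M.child a)
    (hne : k₁ ≠ k₂) : Disjoint (M.subt k₁) (M.subt k₂) := by
  rw [Finset.disjoint_left]
  intro i hi₁ hi₂
  obtain ⟨m, hm⟩ := (M.mem_anc_iff).mp ((M.mem_subt_iff).mp hi₁)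
  obtain ⟨n, hn⟩ := (M.mem_anc_iff).mp ((M.mem_subt_iff).mp hi₂)
  have hl₁ := M.level_child h₁
  have hl₂ := M.level_child h₂
  rcases le_total m n with hmn | hmn
  · have : M.pa^[n - m] k₁ = k₂ := by
      rw [← hm, ← Function.iterate_add_apply]
      rw [show n - m + m = n from by omega, hn]
    have := (M.level_iter _ this).2 (Ne.symm hne)
    omega
  · have : M.pa^[m - n] k₂ = k₁ := by
      rw [← hn, ← Function.iterate_add_apply]
      rw [show m - n + n = m from by omega, hm]
    have := (M.level_iter _ this).2 hne
    omega

lemma sum_subt (a : S) (f : S → ℝ) :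
    ∑ i ∈ M.subt a, f i = f a + ∑ k ∈ M.child a, ∑ i ∈ M.subt k, f i := by
  rw [M.subt_eq a, Finset.sum_insert (M.not_mem_biUnion_child a),
    Finset.sum_biUnion]
  intro k₁ h₁ k₂ h₂ hne
  exact M.subt_disjoint h₁ h₂ hne

end TreeMC

private lemma min_eq_sub_max (x y : ℝ) : min x y = y - max 0 (y - x) := by
  rcases le_total y x with h | h
  · rw [min_eq_right h, max_eq_left (by linarith), sub_zero]
  · rw [min_eq_left h, max_eq_right (by linarith)]; ring

/-- For every `γ ≥ 0` and every state `a ∈ S`, the ski-rental cost-to-go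
function satisfies `V(γ, a) = c^f(a) − Σ_{i ∈ sub(a)} β*_i(γ)·π(i)/π(a)`. -/
theorem V_eq_cf_sub_betaStar {S : Type*} [Fintype S] [DecidableEq S]
    (M : TreeMC S) (c : S → ℝ) (hc : ∀ i, 0 < c i)
    (V : ℝ → S → ℝ) (hV : M.IsSkiValue c V)
    (γ : ℝ) (hγ : 0 ≤ γ) (a : S) :
    V γ a = M.cf c a - ∑ i ∈ M.subt a, M.betaStar c V γ i * M.pi i / M.pi a := by
  have key : ∀ n : ℕ, ∀ a : S, M.L - M.level a ≤ n →
      V γ a = M.cf c a - ∑ i ∈ M.subt a, M.betaStar c V γ i * M.pi i / M.pi a := by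
    intro n
    induction n with
    | zero => intro a ha; have := M.level_lt a; omega
    | succ n ih =>
      intro a ha
      have hIH : ∀ k ∈ M.child a,
          V γ k = M.cf c k - ∑ i ∈ M.subt k, M.betaStar c V γ i * M.pi i / M.pi k := by
        intro k hk
        apply ih
        have h1 := M.level_child hk
        have h2 := M.level_lt k
        omega
      have hVa : V γ a = c a + M.Vf V γ a - M.betaStar c V γ a := by
        rw [hV γ a, min_eq_sub_max, TreeMC.betaStar, TreeMC.Vf]
      have hpa : M.pi a ≠ 0 := ne_of_gt (M.pi_pos a)
      -- rewrite cf and the beta sum using the subtree decomposition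
      have hratio : ∀ k ∈ M.child a, ∀ g : S → ℝ,
          ∑ i ∈ M.subt k, g i * M.pi i / M.pi a
            = M.p k * ∑ i ∈ M.subt k, g i * M.pi i / M.pi k := by
        intro k hk g
        rw [Finset.mul_sum]
        apply Finset.sum_congr rfl
        intro i _
        have hpk : M.pi k = M.p k * M.pi a := M.pi_child' hk
        have hpk0 : M.pi k ≠ 0 := ne_of_gt (M.pi_pos k)
        have hppk : M.p k ≠ 0 := ne_of_gt (M.p_pos k)
        field_simp [hpk]
        rw [hpk]; ring
      have hcf : M.cf c a = c a + ∑ k ∈ M.child a, M.p k * M.cf c k := by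
        rw [TreeMC.cf, M.sum_subt a (fun i => c i * M.pi i / M.pi a),
          mul_div_assoc, div_self hpa, mul_one]
        congr 1
        apply Finset.sum_congr rfl
        intro k hk
        rw [hratio k hk c, TreeMC.cf]
      have hbeta : ∑ i ∈ M.subt a, M.betaStar c V γ i * M.pi i / M.pi a
          = M.betaStar c V γ a + ∑ k ∈ M.child a,
              M.p k * ∑ i ∈ M.subt k, M.betaStar c V γ i * M.pi i / M.pi k := by
        rw [M.sum_subt a (fun i => M.betaStar c V γ i * M.pi i / M.pi a),
          mul_div_assoc, div_self hpa, mul_one]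
        congr 1
        apply Finset.sum_congr rfl
        intro k hk
        exact hratio k hk _
      rw [hVa, hcf, hbeta, TreeMC.Vf]
      have : ∑ k ∈ M.child a, M.p k * V γ k
          = ∑ k ∈ M.child a, M.p k * M.cf c k
            - ∑ k ∈ M.child a, M.p k * ∑ i ∈ M.subt k,
                M.betaStar c V γ i * M.pi i / M.pi k := by
        rw [← Finset.sum_sub_distrib]
        apply Finset.sum_congr rfl
        intro k hk
        rw [hIH k hk]
        ring
      rw [this]
      ring
  exact key M.L a (by omega)
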